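/- Let D be a dictionary of unit-norm elements in a Hilbert space H with coherence M, with M(s-1) < 1. Let g_1,...,g_s ∈ D be distinct and let G(s) = span{g_1,...,g_s}. Then for every f ∈ H, (1/(1+M(s-1))) ∑_{i=1}^s ⟨f,g_i⟩² ≤ ‖P_{G(s)} f‖² ≤ (1/(1-M(s-1))) ∑_{i=1}^s ⟨f,g_i⟩², where P_{G(s)} is the orthogonal projection onto G(s). -/

import Mathlib

open scoped RealInnerProductSpace BigOperators

noncomputable instance spanRangeFin.finiteDimensional
    {H : Type*} [NormedAddCommGroup H] [InnerProductSpace ℝ H]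
    {s : ℕ} (g : Fin s → H) :
    FiniteDimensional ℝ (Submodule.span ℝ (Set.range g)) :=
  FiniteDimensional.span_of_finite ℝ (Set.finite_range g)

lemma norm_sum_sq_expand {H : Type*} [NormedAddCommGroup H] [InnerProductSpace ℝ H] {s : ℕ} (g : Fin s → H) (c : Fin s → ℝ)
    (hg1 : ∀ i, ‖g i‖ = 1) :
    ‖∑ i, c i • g i‖ ^ 2 =
      ∑ i, c i ^ 2 + ∑ i, ∑ j ∈ Finset.univ.erase i, c i * c j * ⟪g i, g j⟫ := by
  rw [← real_inner_self_eq_norm_sq, sum_inner]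
  rw [← Finset.sum_add_distrib]
  refine Finset.sum_congr rfl fun i _ => ?_
  rw [real_inner_smul_left, inner_sum]
  rw [← Finset.add_sum_erase _ _ (Finset.mem_univ i)]
  rw [real_inner_smul_right, real_inner_self_eq_norm_sq, hg1 i]
  rw [mul_add]
  congr 1
  · ring
  · rw [Finset.mul_sum]
    refine Finset.sum_congr rfl fun j _ => ?_
    rw [real_inner_smul_right]; ring

lemma off_diag_bound {H : Type*} [NormedAddCommGroup H] [InnerProductSpace ℝ H] {s : ℕ} (g : Fin s → H) (M : ℝ) (hM0 : 0 ≤ M)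
    (hMg : ∀ i j : Fin s, i ≠ j → |⟪g i, g j⟫| ≤ M) (c : Fin s → ℝ) (hs : 1 ≤ s) :
    |∑ i, ∑ j ∈ Finset.univ.erase i, c i * c j * ⟪g i, g j⟫| ≤
      M * ((s : ℝ) - 1) * ∑ i, c i ^ 2 := by
  have step1 : |∑ i, ∑ j ∈ Finset.univ.erase i, c i * c j * ⟪g i, g j⟫| ≤
      ∑ i, ∑ j ∈ Finset.univ.erase i, M * (c i ^ 2 + c j ^ 2) / 2 := by
    refine (Finset.abs_sum_le_sum_abs _ _).trans ?_
    refine Finset.sum_le_sum fun i _ => ?_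
    refine (Finset.abs_sum_le_sum_abs _ _).trans ?_
    refine Finset.sum_le_sum fun j hj => ?_
    have hij : i ≠ j := fun h => (Finset.ne_of_mem_erase hj) h.symm
    have hG := hMg i j hij
    have h1 : |c i * c j * ⟪g i, g j⟫| = |c i| * |c j| * |⟪g i, g j⟫| := by
      rw [abs_mul, abs_mul]
    nlinarith [sq_nonneg (|c i| - |c j|), abs_nonneg (c i), abs_nonneg (c j),
      sq_abs (c i), sq_abs (c j), abs_nonneg (⟪g i, g j⟫),
      mul_nonneg (abs_nonneg (c i)) (abs_nonneg (c j))]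
  refine step1.trans (le_of_eq ?_)
  have hcard : ∀ i : Fin s, (Finset.univ.erase i).card = s - 1 := fun i => by
    rw [Finset.card_erase_of_mem (Finset.mem_univ i), Finset.card_univ, Fintype.card_fin]
  have hsum : ∀ i : Fin s, ∑ j ∈ Finset.univ.erase i, M * (c i ^ 2 + c j ^ 2) / 2
      = M / 2 * (((s : ℝ) - 1) * c i ^ 2 + ((∑ j, c j ^ 2) - c i ^ 2)) := by
    intro i
    have h2 : ∑ j ∈ Finset.univ.erase i, c j ^ 2 = (∑ j, c j ^ 2) - c i ^ 2 :=
      Finset.sum_erase_eq_sub (Finset.mem_univ i)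
    have h3 : ∑ j ∈ Finset.univ.erase i, (c i ^ 2 : ℝ) = ((s : ℝ) - 1) * c i ^ 2 := by
      rw [Finset.sum_const, hcard i, nsmul_eq_mul]
      have : ((s - 1 : ℕ) : ℝ) = (s : ℝ) - 1 := by
        push_cast [Nat.cast_sub hs]; ring
      rw [this]
    calc ∑ j ∈ Finset.univ.erase i, M * (c i ^ 2 + c j ^ 2) / 2
        = M / 2 * ∑ j ∈ Finset.univ.erase i, (c i ^ 2 + c j ^ 2) := by
          rw [Finset.mul_sum]; exact Finset.sum_congr rfl fun j _ => by ring
      _ = _ := by rw [Finset.sum_add_distrib, h2, h3]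
  rw [Finset.sum_congr rfl fun i _ => hsum i]
  rw [Finset.mul_sum, Finset.sum_congr rfl (fun (i : Fin s) _ =>
    (by ring : M / 2 * (((s : ℝ) - 1) * c i ^ 2 + ((∑ j, c j ^ 2) - c i ^ 2))
      = M / 2 * ((s : ℝ) - 2) * c i ^ 2 + M / 2 * ∑ j, c j ^ 2)),
    Finset.sum_add_distrib, ← Finset.mul_sum, Finset.sum_const, Finset.card_univ,
    Fintype.card_fin, nsmul_eq_mul]
  rw [← Finset.mul_sum]
  ring

lemma frame_bounds {H : Type*} [NormedAddCommGroup H] [InnerProductSpace ℝ H]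
    {s : ℕ} (g : Fin s → H) (M : ℝ) (hM0 : 0 ≤ M)
    (hg1 : ∀ i, ‖g i‖ = 1)
    (hMg : ∀ i j : Fin s, i ≠ j → |⟪g i, g j⟫| ≤ M) (c : Fin s → ℝ) (hs : 1 ≤ s) :
    (1 - M * ((s : ℝ) - 1)) * ∑ i, c i ^ 2 ≤ ‖∑ i, c i • g i‖ ^ 2 ∧
      ‖∑ i, c i • g i‖ ^ 2 ≤ (1 + M * ((s : ℝ) - 1)) * ∑ i, c i ^ 2 := by
  have hexp := norm_sum_sq_expand g c hg1
  have hoff := off_diag_bound g M hM0 hMg c hs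
  rw [abs_le] at hoff
  constructor <;> [nlinarith [hoff.1]; nlinarith [hoff.2]]

/-- projection norm bounds for incoherent dictionaries. -/
theorem osga_projection_bounds
    {H : Type*} [NormedAddCommGroup H] [InnerProductSpace ℝ H] [CompleteSpace H]
    (D : Set H) (hnorm : ∀ g ∈ D, ‖g‖ = 1) (M : ℝ)
    (hM : ∀ g ∈ D, ∀ h ∈ D, g ≠ h → |⟪g, h⟫| ≤ M)
    (s : ℕ) (g : Fin s → H) (hgD : ∀ i, g i ∈ D) (hginj : Function.Injective g)
    (hMs : M * (s - 1) < 1) (f : H) :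
    (1 / (1 + M * (s - 1))) * ∑ i, ⟪f, g i⟫ ^ 2 ≤
        ‖(Submodule.orthogonalProjection (Submodule.span ℝ (Set.range g)) f : H)‖ ^ 2 ∧
      ‖(Submodule.orthogonalProjection (Submodule.span ℝ (Set.range g)) f : H)‖ ^ 2 ≤
        (1 / (1 - M * (s - 1))) * ∑ i, ⟪f, g i⟫ ^ 2 := by
  set K := Submodule.span ℝ (Set.range g) with hK
  set p : H := (Submodule.orthogonalProjection K f : H) with hp
  -- trivial case s = 0
  rcases Nat.eq_zero_or_pos s with hs0 | hs
  · subst hs0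
    have hrange : Set.range g = ∅ := by simp
    have hKbot : K = ⊥ := by rw [hK, hrange, Submodule.span_empty]
    have hpmem : p ∈ K := SetLike.coe_mem _
    rw [hKbot, Submodule.mem_bot] at hpmem
    rw [hp] at *
    rw [hpmem]
    simp
  -- now s ≥ 1
  have hg1 : ∀ i, ‖g i‖ = 1 := fun i => hnorm _ (hgD i)
  have hMg : ∀ i j : Fin s, i ≠ j → |⟪g i, g j⟫| ≤ M := fun i j hij =>
    hM _ (hgD i) _ (hgD j) (fun h => hij (hginj h))
  have hMg' : ∀ i j : Fin s, i ≠ j → |⟪g i, g j⟫| ≤ |M| := fun i j hij =>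
    (hMg i j hij).trans (le_abs_self M)
  have hAA : |M| * ((s : ℝ) - 1) = M * ((s : ℝ) - 1) := by
    rcases Nat.lt_or_ge s 2 with h2 | h2
    · have : s = 1 := by omega
      subst this; norm_num
    · have h01 : (⟨0, by omega⟩ : Fin s) ≠ ⟨1, by omega⟩ := by
        intro h; simpa using congrArg Fin.val h
      have hMnn : 0 ≤ M := (abs_nonneg _).trans (hMg _ _ h01)
      rw [abs_of_nonneg hMnn]
  have hs1 : (1 : ℝ) ≤ (s : ℝ) := by exact_mod_cast hs
  have hM0 : 0 ≤ M * ((s : ℝ) - 1) := by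
    rw [← hAA]
    exact mul_nonneg (abs_nonneg M) (by linarith)
  set A : ℝ := M * ((s : ℝ) - 1) with hA
  -- inner products through projection
  have hb : ∀ i, ⟪p, g i⟫ = ⟪f, g i⟫ := by
    intro i
    have hmem : g i ∈ K := Submodule.subset_span (Set.mem_range_self i)
    have := K.starProjection_inner_eq_zero f (g i) hmem
    rw [Submodule.starProjection_apply] at this
    rw [inner_sub_left] at this
    linarith
  obtain ⟨c, hc⟩ := (Submodule.mem_span_range_iff_exists_fun ℝ).mp
    (show p ∈ K from SetLike.coe_mem _)
  set Sb : ℝ := ∑ i, ⟪f, g i⟫ ^ 2 with hSb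
  set Sc : ℝ := ∑ i, c i ^ 2 with hSc
  have hSbnn : 0 ≤ Sb := Finset.sum_nonneg fun i _ => sq_nonneg _
  have hScnn : 0 ≤ Sc := Finset.sum_nonneg fun i _ => sq_nonneg _
  have hNnn : (0:ℝ) ≤ ‖p‖ ^ 2 := sq_nonneg _
  -- ‖p‖² = ∑ c i * ⟪f, g i⟫
  have hNeq : ‖p‖ ^ 2 = ∑ i, c i * ⟪f, g i⟫ := by
    rw [← real_inner_self_eq_norm_sq]
    calc ⟪p, p⟫ = ⟪∑ i, c i • g i, p⟫ := by rw [hc]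
      _ = ∑ i, c i * ⟪p, g i⟫ := by
          rw [sum_inner]
          exact Finset.sum_congr rfl fun i _ => by
            rw [real_inner_smul_left, real_inner_comm]
      _ = ∑ i, c i * ⟪f, g i⟫ := Finset.sum_congr rfl fun i _ => by rw [hb i]
  have frame : ∀ c : Fin s → ℝ, (1 - A) * ∑ i, c i ^ 2 ≤ ‖∑ i, c i • g i‖ ^ 2 ∧
      ‖∑ i, c i • g i‖ ^ 2 ≤ (1 + A) * ∑ i, c i ^ 2 := fun c => by
    have := frame_bounds g |M| (abs_nonneg M) hg1 hMg' c hs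
    rwa [hAA] at this
  have hframe := frame c
  rw [hc] at hframe
  have hlowc : (1 - A) * Sc ≤ ‖p‖ ^ 2 := hframe.1
  have hcs : (∑ i, c i * ⟪f, g i⟫) ^ 2 ≤ Sc * Sb :=
    Finset.sum_mul_sq_le_sq_mul_sq _ _ _
  have h1A : 0 < 1 - A := by linarith
  have h1A' : 0 < 1 + A := by linarith
  constructor
  · -- lower bound
    set q : H := ∑ i, (⟪f, g i⟫ : ℝ) • g i with hq
    have hpq : ⟪p, q⟫ = Sb := by
      rw [hq, inner_sum, hSb]
      exact Finset.sum_congr rfl fun i _ => by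
        rw [real_inner_smul_right, hb i]; ring
    have hqn : ‖q‖ ^ 2 ≤ (1 + A) * Sb := (frame _).2
    have h1 : Sb ≤ ‖p‖ * ‖q‖ := by
      rw [← hpq]; exact real_inner_le_norm p q
    have h2 : Sb ^ 2 ≤ ‖p‖ ^ 2 * ((1 + A) * Sb) := by
      nlinarith [norm_nonneg p, norm_nonneg q, sq_nonneg (‖p‖*‖q‖)]
    rw [div_mul_eq_mul_div, one_mul, div_le_iff₀ h1A']
    rcases hSbnn.eq_or_lt with h | h
    · rw [← h]; positivity
    · exact le_of_mul_le_mul_right (by nlinarith) h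
  · -- upper bound
    have key : (1 - A) * ‖p‖ ^ 2 ≤ Sb := by
      rcases hNnn.eq_or_lt with h | h
      · rw [← h]; simpa using hSbnn
      · have hcs' : (‖p‖ ^ 2) ^ 2 ≤ Sc * Sb := by rw [hNeq]; exact hcs
        have h3 : (1 - A) * (‖p‖ ^ 2) ^ 2 ≤ (1 - A) * (Sc * Sb) :=
          mul_le_mul_of_nonneg_left hcs' h1A.le
        have h4 : (1 - A) * (Sc * Sb) ≤ ‖p‖ ^ 2 * Sb := by
          calc (1 - A) * (Sc * Sb) = ((1 - A) * Sc) * Sb := by ring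
            _ ≤ ‖p‖ ^ 2 * Sb := mul_le_mul_of_nonneg_right hlowc hSbnn
        have h5 := h3.trans h4
        exact le_of_mul_le_mul_right (by nlinarith) h
    rw [div_mul_eq_mul_div, one_mul, le_div_iff₀ h1A]
    linarith [key]
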